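/- For any constant A ≥ 1, the function g(u) = A·u² − min{u², a} is convex on ℝ, where a > 0. -/

import Mathlib

theorem stmt_0 (a A : ℝ) (ha : 0 < a) (hA : 1 ≤ A) :
    ConvexOn ℝ Set.univ (fun u : ℝ => A * u ^ 2 - min (u ^ 2) a) := by
  have h1 : ConvexOn ℝ (Set.univ : Set ℝ) (fun u : ℝ => (A - 1) * u ^ 2) := by
    have := (Even.convexOn_pow (n := 2) (by norm_num)).smul (c := A - 1) (by linarith)
    simpa [smul_eq_mul] using this
  have h2 : ConvexOn ℝ (Set.univ : Set ℝ) (fun u : ℝ => A * u ^ 2 - a) := by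
    have := (Even.convexOn_pow (n := 2) (by norm_num)).smul (c := A) (by linarith)
    simpa [smul_eq_mul, sub_eq_add_neg, Pi.add_def] using this.add_const (-a)
  have := h1.sup h2
  convert this using 2 with u
  · rfl
  · rfl
  simp only [Pi.sup_apply]
  rw [sub_mul, one_mul, max_sub_sub_left]
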